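/- Let q be a real number with q > 0 and q ≠ 1. Define operators r_x, r_y on ℂ[x,y] by r_x(x^n y^m) = q^{2m} x^{n+1} y^m and r_y(x^n y^m) = x^n y^{m+1} (right multiplication by x, resp. y, in the quantum plane yx = q²xy, written in ordered monomials). Then their adjoints with respect to the q-Fischer inner product on ℂ[x,y] are given, for all u ∈ ℂ[x,y], f ∈ ℂ[x], g ∈ ℂ[y], by ⟨r_x(u), f(x)g(y)⟩ = ⟨u, (D_{q²}f)(x) · g(q²y)⟩ and ⟨r_y(u), f(x)g(y)⟩ = ⟨u, f(x) · (D_{q²}g)(y)⟩; i.e. r_x†(f ⊗ g) = D_{q²}f ⊗ T_{q²}g and r_y†(f ⊗ g) = f ⊗ D_{q²}g. -/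

import Mathlib

noncomputable section

open Finset

/-- The q-number [x] = (q^x − q^{−x})/(q − q⁻¹) for real q > 0 and x ∈ ℝ. -/
def qnumR (q x : ℝ) : ℝ := (q ^ x - q ^ (-x)) / (q - q⁻¹)

/-- [x]_n = ∏_{s=0}^{n−1}[x+s]. -/
def qpochR (q x : ℝ) (n : ℕ) : ℝ := ∏ s ∈ Finset.range n, qnumR q (x + s)

/-- [n]! = [1]_n. -/
def qfactR (q : ℝ) (n : ℕ) : ℝ := ∏ s ∈ Finset.range n, qnumR q ((s : ℝ) + 1)

/-- [n choose k] = [n]!/([k]![n−k]!). -/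
def qbinomR (q : ℝ) (n k : ℕ) : ℝ := qfactR q n / (qfactR q k * qfactR q (n - k))

/-- ℂ[z] with basis the monomials z^m (with its convolution product). -/
abbrev P1 : Type := AddMonoidAlgebra ℂ ℕ

/-- ℂ[x] ⊗ ℂ[y] with basis the monomials x^k y^l. -/
abbrev P2 : Type := (ℕ × ℕ) →₀ ℂ

def mono (k l : ℕ) : P2 := Finsupp.single (k, l) 1

/-- q-Fischer inner product on ℂ[z]: ⟨z^n, z^m⟩ = δ_{n,m} q^{n(n−1)/2}[n]!. -/
def ip1 (q : ℝ) (P Q : P1) : ℂ :=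
  Finsupp.sum P.coeff fun m c =>
    c * (starRingEnd ℂ) (Q.coeff m) * ((q : ℂ) ^ (m * (m - 1) / 2) * (qfactR q m : ℂ))

/-- q-Fischer inner product on ℂ[x]⊗ℂ[y]:
⟨x^a y^b, x^c y^d⟩ = δ_{a,c} δ_{b,d} q^{a(a−1)/2+b(b−1)/2}[a]![b]!. -/
def ip2 (q : ℝ) (P Q : P2) : ℂ :=
  Finsupp.sum P fun ab c =>
    c * (starRingEnd ℂ) (Q ab) *
      ((q : ℂ) ^ (ab.1 * (ab.1 - 1) / 2 + ab.2 * (ab.2 - 1) / 2)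
        * (qfactR q ab.1 : ℂ) * (qfactR q ab.2 : ℂ))

/-- The element f(x)g(y) of ℂ[x]⊗ℂ[y]. -/
def fg (f g : P1) : P2 :=
  Finsupp.sum f.coeff fun a ca => Finsupp.sum g.coeff fun b cb => Finsupp.single (a, b) (ca * cb)

/-- The q-derivative D_{q²}, with D_{q²} z^m = q^{m−1}[m] z^{m−1}. -/
def Dq (q : ℝ) : P1 →ₗ[ℂ] P1 :=
  (Finsupp.lsum ℂ fun (m : ℕ) => LinearMap.toSpanSingleton ℂ P1
    (((q ^ (m - 1) * qnumR q m : ℝ) : ℂ) • (AddMonoidAlgebra.single (m - 1) 1 : P1))) ∘ₗ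
    (AddMonoidAlgebra.coeffLinearEquiv ℂ).toLinearMap

/-- The scaling operator h(z) ↦ h(c·z). -/
def scP (c : ℂ) : P1 →ₗ[ℂ] P1 :=
  (Finsupp.lsum ℂ fun (m : ℕ) => LinearMap.toSpanSingleton ℂ P1
    ((c ^ m) • (AddMonoidAlgebra.single m 1 : P1))) ∘ₗ
    (AddMonoidAlgebra.coeffLinearEquiv ℂ).toLinearMap

/-- Right multiplication by x in the quantum plane, in ordered monomials:
r_x(x^n y^m) = q^{2m} x^{n+1} y^m. -/
def rx (q : ℝ) : P2 →ₗ[ℂ] P2 :=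
  Finsupp.lsum ℂ fun nm => LinearMap.toSpanSingleton ℂ P2
    ((((q ^ (2 * nm.2) : ℝ)) : ℂ) • mono (nm.1 + 1) nm.2)

/-- Right multiplication by y in the quantum plane: r_y(x^n y^m) = x^n y^{m+1}. -/
def ry : P2 →ₗ[ℂ] P2 :=
  Finsupp.lsum ℂ fun nm => LinearMap.toSpanSingleton ℂ P2 (mono nm.1 (nm.2 + 1))

lemma qnumR_zero (q : ℝ) : qnumR q 0 = 0 := by
  simp [qnumR]

lemma qfactR_succ (q : ℝ) (n : ℕ) :
    qfactR q (n + 1) = qfactR q n * qnumR q ((n : ℝ) + 1) := by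
  simp [qfactR, Finset.prod_range_succ]

lemma tri_succ (n : ℕ) : (n + 1) * ((n + 1) - 1) / 2 = n * (n - 1) / 2 + n := by
  cases n with
  | zero => rfl
  | succ k =>
    rw [show (k + 1 + 1) * ((k + 1 + 1) - 1) = (k+1) * ((k+1) - 1) + 2 * (k+1) from by
      simp only [Nat.add_sub_cancel]; ring]
    rw [Nat.add_mul_div_left _ _ (by norm_num : 0 < 2)]

lemma Dq_single (q : ℝ) (a : ℕ) (b : ℂ) :
    Dq q (AddMonoidAlgebra.single a b) = AddMonoidAlgebra.single (a - 1) (b * ((q ^ (a - 1) * qnumR q a : ℝ) : ℂ)) := by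
  rw [Dq, LinearMap.comp_apply, LinearEquiv.coe_coe, AddMonoidAlgebra.coeffLinearEquiv_apply,
    AddMonoidAlgebra.coeff_single]
  erw [Finsupp.lsum_single]
  rw [LinearMap.toSpanSingleton_apply, smul_smul, AddMonoidAlgebra.smul_single, smul_eq_mul, mul_one]

lemma scP_single (c : ℂ) (a : ℕ) (b : ℂ) :
    scP c (AddMonoidAlgebra.single a b) = AddMonoidAlgebra.single a (b * c ^ a) := by
  rw [scP, LinearMap.comp_apply, LinearEquiv.coe_coe, AddMonoidAlgebra.coeffLinearEquiv_apply,
    AddMonoidAlgebra.coeff_single]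
  erw [Finsupp.lsum_single]
  rw [LinearMap.toSpanSingleton_apply, smul_smul, AddMonoidAlgebra.smul_single, smul_eq_mul, mul_one]

lemma Dq_apply (q : ℝ) (f : P1) (n : ℕ) :
    (Dq q f).coeff n = ((q ^ n * qnumR q ((n : ℝ) + 1) : ℝ) : ℂ) * f.coeff (n + 1) := by
  induction f using AddMonoidAlgebra.induction_linear with
  | zero => simp
  | add f g hf hg => rw [map_add, AddMonoidAlgebra.coeff_add, Finsupp.add_apply, hf, hg,
      AddMonoidAlgebra.coeff_add, Finsupp.add_apply]; ring
  | single a b =>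
    rw [Dq_single, AddMonoidAlgebra.coeff_single, AddMonoidAlgebra.coeff_single, Finsupp.single_apply, Finsupp.single_apply]
    by_cases h : a = n + 1
    · subst h
      rw [if_pos (by omega), if_pos rfl]
      push_cast [Nat.add_sub_cancel]
      ring
    · rw [if_neg h, mul_zero]
      by_cases h2 : a - 1 = n
      · have ha : a = 0 := by omega
        subst ha
        simp [qnumR_zero]
      · rw [if_neg h2]

lemma scP_apply (c : ℂ) (f : P1) (n : ℕ) :
    (scP c f).coeff n = c ^ n * f.coeff n := by
  induction f using AddMonoidAlgebra.induction_linear with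
  | zero => simp
  | add f g hf hg => rw [map_add, AddMonoidAlgebra.coeff_add, Finsupp.add_apply, hf, hg,
      AddMonoidAlgebra.coeff_add, Finsupp.add_apply]; ring
  | single a b =>
    rw [scP_single, AddMonoidAlgebra.coeff_single, AddMonoidAlgebra.coeff_single, Finsupp.single_apply, Finsupp.single_apply]
    by_cases h : a = n
    · subst h; rw [if_pos rfl, if_pos rfl]; ring
    · rw [if_neg h, if_neg h, mul_zero]

lemma fg_single_single (a b : ℕ) (ca cb : ℂ) :
    fg (AddMonoidAlgebra.single a ca) (AddMonoidAlgebra.single b cb) = Finsupp.single (a, b) (ca * cb) := by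
  rw [fg, AddMonoidAlgebra.coeff_single, AddMonoidAlgebra.coeff_single, Finsupp.sum_single_index, Finsupp.sum_single_index]
  · simp
  · rw [Finsupp.sum_single_index] <;> simp

lemma fg_add_left (f1 f2 g : P1) : fg (f1 + f2) g = fg f1 g + fg f2 g := by
  rw [fg, AddMonoidAlgebra.coeff_add, Finsupp.sum_add_index] <;> simp [fg, add_mul, Finsupp.single_add, Finsupp.sum_add]

lemma fg_add_right (f g1 g2 : P1) : fg f (g1 + g2) = fg f g1 + fg f g2 := by
  rw [fg, fg, fg, ← Finsupp.sum_add]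
  apply Finsupp.sum_congr
  intro a _
  rw [AddMonoidAlgebra.coeff_add, Finsupp.sum_add_index] <;> simp [mul_add, Finsupp.single_add]

lemma fg_apply (f g : P1) (a b : ℕ) : fg f g (a, b) = f.coeff a * g.coeff b := by
  induction f using AddMonoidAlgebra.induction_linear with
  | zero => simp [fg]
  | add f1 f2 h1 h2 => rw [fg_add_left, Finsupp.add_apply, h1, h2, AddMonoidAlgebra.coeff_add, Finsupp.add_apply]; ring
  | single a' ca =>
    induction g using AddMonoidAlgebra.induction_linear with
    | zero => simp [fg]
    | add g1 g2 h1 h2 => rw [fg_add_right, Finsupp.add_apply, h1, h2, AddMonoidAlgebra.coeff_add, Finsupp.add_apply]; ring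
    | single b' cb =>
      rw [fg_single_single, AddMonoidAlgebra.coeff_single, AddMonoidAlgebra.coeff_single, Finsupp.single_apply, Finsupp.single_apply, Finsupp.single_apply]
      by_cases h1 : a' = a <;> by_cases h2 : b' = b <;>
        simp [h1, h2, Prod.ext_iff]

lemma ip2_single (q : ℝ) (p : ℕ × ℕ) (c : ℂ) (Q : P2) :
    ip2 q (Finsupp.single p c) Q =
      c * (starRingEnd ℂ) (Q p) *
        ((q : ℂ) ^ (p.1 * (p.1 - 1) / 2 + p.2 * (p.2 - 1) / 2)
          * (qfactR q p.1 : ℂ) * (qfactR q p.2 : ℂ)) := by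
  rw [ip2, Finsupp.sum_single_index]
  simp

lemma ip2_sum (q : ℝ) (u : P2) (F : ℕ × ℕ → ℂ → P2) (Q : P2) :
    ip2 q (u.sum F) Q = u.sum fun i c => ip2 q (F i c) Q := by
  rw [ip2, Finsupp.sum_sum_index (fun _ => by simp) (fun _ _ _ => by ring)]
  rfl

lemma rx_eq (q : ℝ) (u : P2) :
    rx q u = u.sum fun nm c => Finsupp.single (nm.1 + 1, nm.2) (c * ((q ^ (2 * nm.2) : ℝ) : ℂ)) := by
  rw [rx]
  erw [Finsupp.lsum_apply]
  apply Finsupp.sum_congr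
  intro nm _
  rw [LinearMap.toSpanSingleton_apply, mono, smul_smul, Finsupp.smul_single, smul_eq_mul, mul_one]

lemma ry_eq (u : P2) :
    ry u = u.sum fun nm c => Finsupp.single (nm.1, nm.2 + 1) c := by
  rw [ry]
  erw [Finsupp.lsum_apply]
  apply Finsupp.sum_congr
  intro nm _
  rw [LinearMap.toSpanSingleton_apply, mono, Finsupp.smul_single, smul_eq_mul, mul_one]


/-- **Adjoints of the quantum-plane multiplication operators** (formula (5.7)):
r_x†(f⊗g) = D_{q²}f ⊗ T_{q²}g and r_y†(f⊗g) = f ⊗ D_{q²}g, i.e. for all u, f, g: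
⟨r_x(u), f(x)g(y)⟩ = ⟨u, (D_{q²}f)(x)·g(q²y)⟩ and
⟨r_y(u), f(x)g(y)⟩ = ⟨u, f(x)·(D_{q²}g)(y)⟩. -/
theorem rx_ry_adjoints (q : ℝ) (hq : 0 < q) (hq1 : q ≠ 1)
    (u : P2) (f g : P1) :
    ip2 q (rx q u) (fg f g) = ip2 q u (fg (Dq q f) (scP (((q : ℂ)) ^ 2) g)) ∧
    ip2 q (ry u) (fg f g) = ip2 q u (fg f (Dq q g)) := by
  constructor
  · rw [rx_eq, ip2_sum]
    conv_rhs => rw [ip2]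
    apply Finsupp.sum_congr
    rintro ⟨n, m⟩ -
    rw [ip2_single]
    simp only
    rw [fg_apply, fg_apply, Dq_apply, scP_apply]
    simp only [map_mul, map_pow, Complex.conj_ofReal]
    rw [show (n + 1) * ((n + 1) - 1) / 2 + m * (m - 1) / 2
        = (n * (n - 1) / 2 + m * (m - 1) / 2) + n from by rw [tri_succ]; omega]
    rw [pow_add, qfactR_succ]
    push_cast
    ring
  · rw [ry_eq, ip2_sum]
    conv_rhs => rw [ip2]
    apply Finsupp.sum_congr
    rintro ⟨n, m⟩ -
    rw [ip2_single]
    simp only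
    rw [fg_apply, fg_apply, Dq_apply]
    simp only [map_mul, Complex.conj_ofReal]
    rw [show n * (n - 1) / 2 + (m + 1) * ((m + 1) - 1) / 2
        = (n * (n - 1) / 2 + m * (m - 1) / 2) + m from by rw [tri_succ]; omega]
    rw [pow_add, qfactR_succ]
    push_cast
    ring
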